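/- The function f(y, v*) = det(v*B_{n-1}(y); v*B_{n-2}(y); …; v*) is invariant under the translation part of the affine coadjoint action: f(y + u v*, v*) = f(y, v*) for all u ∈ M_{n,1}(ℂ). -/

import Mathlib

open Matrix BigOperators

/-- The signed coefficients of the characteristic polynomial:
`det (t•I - x) = t^n - p 1 x * t^(n-1) - ⋯ - p n x`. -/
noncomputable def charCoeff (n : ℕ) (k : ℕ) (x : Matrix (Fin n) (Fin n) ℂ) : ℂ :=
  -(x.charpoly.coeff (n - k))

/-- `B n k x = x^k - p 1 x • x^(k-1) - ⋯ - p k x • I`. -/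
noncomputable def gradB (n : ℕ) (k : ℕ) (x : Matrix (Fin n) (Fin n) ℂ) :
    Matrix (Fin n) (Fin n) ℂ :=
  x ^ k - ∑ i ∈ Finset.Icc 1 k, charCoeff n i x • x ^ (k - i)


lemma gradB_zero (n : ℕ) (x : Matrix (Fin n) (Fin n) ℂ) : gradB n 0 x = 1 := by
  simp [gradB]

lemma gradB_succ (n k : ℕ) (x : Matrix (Fin n) (Fin n) ℂ) :
    gradB n (k+1) x = gradB n k x * x - charCoeff n (k+1) x • 1 := by
  unfold gradB
  have hins : Finset.Icc 1 (k+1) = insert (k+1) (Finset.Icc 1 k) := by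
    ext a; simp; omega
  rw [hins, Finset.sum_insert (by simp)]
  rw [sub_mul, Finset.sum_mul]
  have h : ∀ i ∈ Finset.Icc 1 k,
      charCoeff n i x • x ^ (k - i) * x = charCoeff n i x • x ^ (k + 1 - i) := by
    intro i hi
    obtain ⟨h1, h2⟩ := Finset.mem_Icc.mp hi
    rw [smul_mul_assoc, ← pow_succ]
    congr 2
    omega
  rw [Finset.sum_congr rfl h, ← pow_succ]
  simp only [Nat.sub_self, pow_zero]
  abel

lemma one_by_one_mul {n : ℕ} (M : Matrix (Fin 1) (Fin 1) ℂ) (N : Matrix (Fin 1) (Fin n) ℂ) :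
    M * N = M 0 0 • N := by
  ext i j
  fin_cases i
  simp [Matrix.mul_apply, Fin.sum_univ_one]

lemma key (n : ℕ) (y : Matrix (Fin n) (Fin n) ℂ) (vstar : Matrix (Fin 1) (Fin n) ℂ)
    (u : Matrix (Fin n) (Fin 1) ℂ) (k : ℕ) :
    ∃ c : ℕ → ℂ,
      vstar * gradB n k (y + u * vstar) =
        vstar * gradB n k y + ∑ j ∈ Finset.range k, c j • (vstar * gradB n j y) := by
  induction k with
  | zero => exact ⟨0, by simp [gradB_zero]⟩
  | succ k ih =>
    obtain ⟨c, hc⟩ := ih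
    set y' := y + u * vstar with hy'
    have h4 : ∀ j : ℕ, vstar * gradB n j y * y
        = vstar * gradB n (j+1) y + charCoeff n (j+1) y • vstar := by
      intro j
      have h5 : gradB n j y * y = gradB n (j+1) y + charCoeff n (j+1) y • 1 := by
        rw [gradB_succ]; abel
      rw [Matrix.mul_assoc, h5, Matrix.mul_add, Matrix.mul_smul, Matrix.mul_one]
    have h1 : vstar * gradB n (k+1) y'
        = vstar * gradB n k y' * y' - charCoeff n (k+1) y' • vstar := by
      rw [gradB_succ, Matrix.mul_sub, Matrix.mul_smul, Matrix.mul_one, Matrix.mul_assoc]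
    set α : ℂ := (vstar * gradB n k y' * u) 0 0 with hα
    have h2 : vstar * gradB n k y' * y' = vstar * gradB n k y' * y + α • vstar := by
      conv_lhs => rw [hy']
      rw [Matrix.mul_add, ← Matrix.mul_assoc _ u vstar, one_by_one_mul]
    have h3 : vstar * gradB n k y' * y
        = vstar * gradB n (k+1) y + charCoeff n (k+1) y • vstar
          + ∑ j ∈ Finset.range k,
              c j • (vstar * gradB n (j+1) y + charCoeff n (j+1) y • vstar) := by
      rw [hc, Matrix.add_mul, Matrix.sum_mul, h4]
      congr 1
      refine Finset.sum_congr rfl fun j _ => ?_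
      rw [Matrix.smul_mul, h4]
    set d : ℂ := charCoeff n (k+1) y + (∑ j ∈ Finset.range k, c j * charCoeff n (j+1) y)
        + α - charCoeff n (k+1) y' with hd
    refine ⟨fun j => if j = 0 then d else c (j-1), ?_⟩
    rw [Finset.sum_range_succ']
    simp only [Nat.succ_ne_zero, if_false, if_true, Nat.add_sub_cancel, eq_self_iff_true]
    rw [h1, h2, h3]
    have hb : vstar * gradB n 0 y = vstar := by rw [gradB_zero, Matrix.mul_one]
    rw [hb, hd]
    simp only [smul_add, Finset.sum_add_distrib, smul_smul, ← Finset.sum_smul]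
    module

/-- The semi-invariant `f(y, v*) = det (v* B_{n-1}(y); v* B_{n-2}(y); …; v* B_0(y))`. -/
noncomputable def fInv (n : ℕ) (y : Matrix (Fin n) (Fin n) ℂ)
    (vstar : Matrix (Fin 1) (Fin n) ℂ) : ℂ :=
  Matrix.det (Matrix.of fun i j : Fin n => (vstar * gradB n (n - 1 - (i : ℕ)) y) 0 j)

/-- `f(y + u v*, v*) = f(y, v*)`: invariance under the translation part. -/
theorem stmt6 (n : ℕ) (y : Matrix (Fin n) (Fin n) ℂ) (vstar : Matrix (Fin 1) (Fin n) ℂ)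
    (u : Matrix (Fin n) (Fin 1) ℂ) :
    fInv n (y + u * vstar) vstar = fInv n y vstar := by
  classical
  set N : Matrix (Fin n) (Fin n) ℂ → Matrix (Fin n) (Fin n) ℂ :=
    fun x => Matrix.of fun i j : Fin n => (vstar * gradB n (i : ℕ) x) 0 j with hN
  have hrev : ∀ x, fInv n x vstar = (Equiv.Perm.sign (Fin.revPerm (n := n)) : ℂ) * (N x).det := by
    intro x
    have := Matrix.det_permute (Fin.revPerm (n := n)) (N x)
    rw [← this]
    unfold fInv
    congr 1
    ext i j
    have hval : n - 1 - (i : ℕ) = ((Fin.rev i : Fin n) : ℕ) := by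
      rw [Fin.val_rev]; omega
    simp only [Matrix.submatrix_apply, Matrix.of_apply, Fin.revPerm_apply, id_eq, hN, hval]
  have hdet : (N (y + u * vstar)).det = (N y).det := by
    set c : Fin n → ℕ → ℂ := fun i => Classical.choose (key n y vstar u (i : ℕ)) with hcdef
    set L : Matrix (Fin n) (Fin n) ℂ :=
      Matrix.of (fun i i' : Fin n =>
        if i' = i then (1 : ℂ) else if (i' : ℕ) < (i : ℕ) then c i (i' : ℕ) else 0) with hLdef
    have hL : N (y + u * vstar) = L * N y := by
      ext i j
      have spec := Classical.choose_spec (key n y vstar u (i : ℕ))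
      rw [Matrix.mul_apply]
      have hsplit : ∑ i' : Fin n, L i i' * N y i' j
          = L i i * N y i j + ∑ i' ∈ Finset.univ.erase i, L i i' * N y i' j :=
        (Finset.add_sum_erase _ _ (Finset.mem_univ i)).symm
      have hd : L i i = 1 := by simp [hLdef]
      have he : ∀ i' ∈ Finset.univ.erase i,
          L i i' * N y i' j = if (i' : ℕ) < (i : ℕ) then c i (i' : ℕ) * N y i' j else 0 := by
        intro i' hi'
        have hne : i' ≠ i := Finset.ne_of_mem_erase hi'
        simp only [hLdef, Matrix.of_apply, if_neg hne]
        split_ifs <;> simp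
      have hsum : ∑ e ∈ Finset.range (i : ℕ), c i e * (vstar * gradB n e y) 0 j
          = ∑ i' ∈ Finset.univ.erase i,
              (if (i' : ℕ) < (i : ℕ) then c i (i' : ℕ) * N y i' j else 0) := by
        rw [← Finset.sum_filter]
        refine Finset.sum_bij'
          (fun e he => (⟨e, lt_trans (Finset.mem_range.mp he) i.isLt⟩ : Fin n))
          (fun i' _ => (i' : ℕ)) ?_ ?_ ?_ ?_ ?_
        · intro e he
          have h1 : e < (i : ℕ) := Finset.mem_range.mp he
          simp only [Finset.mem_filter, Finset.mem_erase, Finset.mem_univ, and_true, true_and]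
          refine ⟨?_, h1⟩
          intro hcon
          have := congrArg Fin.val hcon
          simp only [] at this
          omega
        · intro i' hi'
          simp only [Finset.mem_filter] at hi'
          exact Finset.mem_range.mpr hi'.2
        · intro e he; rfl
        · intro i' hi'; rfl
        · intro e he; rfl
      have lhs : N (y + u * vstar) i j
          = N y i j + ∑ e ∈ Finset.range (i : ℕ), c i e * (vstar * gradB n e y) 0 j := by
        have := congrFun (congrFun spec 0) j
        simpa [hN, Matrix.add_apply, Matrix.sum_apply, Matrix.smul_apply] using this
      rw [lhs, hsplit, hd, one_mul, Finset.sum_congr rfl he, ← hsum]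
    have hLtri : L.BlockTriangular OrderDual.toDual := by
      intro i j hij
      have hij' : i < j := hij
      have h1 : j ≠ i := ne_of_gt hij'
      have h2 : ¬ ((j : ℕ) < (i : ℕ)) := by
        rw [Fin.lt_iff_val_lt_val] at hij'; omega
      simp [hLdef, h1, h2, hij'.asymm]
    have hLdet : L.det = 1 := by
      rw [Matrix.det_of_lowerTriangular L hLtri]
      simp [hLdef]
    rw [hL, Matrix.det_mul, hLdet, one_mul]
  rw [hrev, hrev, hdet]
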